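/- arXiv:1402.4928 — 3 statements merged into one kernel-verified Lean document; each statement's English description precedes it below -/
import Mathlib

section
/- Let p be a prime, r = p^t for some t ≥ 1, and let α ∈ F_p((1/T)) have continued fraction expansion [T, T^r, T^{r^2}, ..., T^{r^k}, ...]. Then α satisfies the equation α = T + 1/α^r, i.e. α^{r+1} - Tα^r - 1 = 0. -/
namespace FrobCF

variable {F : Type*} [Field F]

lemma order_inv {x : LaurentSeries F} (hx : x ≠ 0) : (x⁻¹).order = -x.order := by
  have h := HahnSeries.order_mul hx (inv_ne_zero hx)
  rw [mul_inv_cancel₀ hx, HahnSeries.order_one] at h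
  omega

lemma order_add_inv {a b : LaurentSeries F} (ha : a ≠ 0) (hao : a.order < 0)
    (hb : b ≠ 0) (hbo : b.order < 0) : a + b⁻¹ ≠ 0 ∧ (a + b⁻¹).order = a.order := by
  have hb' : b⁻¹ ≠ 0 := inv_ne_zero hb
  have hlt : a.orderTop < (b⁻¹).orderTop := by
    rw [← HahnSeries.order_eq_orderTop_of_ne_zero ha, ← HahnSeries.order_eq_orderTop_of_ne_zero hb']
    exact_mod_cast lt_of_lt_of_le hao (by rw [order_inv hb]; omega)
  have hot := HahnSeries.orderTop_add_eq_left hlt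
  have hne : a + b⁻¹ ≠ 0 := by
    intro h
    rw [h, HahnSeries.orderTop_zero, eq_comm, HahnSeries.orderTop_eq_top] at hot
    exact ha hot
  refine ⟨hne, ?_⟩
  have h2 : (((a + b⁻¹).order : ℤ) : WithTop ℤ) = ((a.order : ℤ) : WithTop ℤ) := by
    rw [HahnSeries.order_eq_orderTop_of_ne_zero hne, HahnSeries.order_eq_orderTop_of_ne_zero ha]
    exact hot
  exact_mod_cast h2

lemma order_sub_ge {x y : LaurentSeries F} (hne : x ≠ y) :
    min x.order y.order ≤ (x - y).order := by
  have h : x + -y ≠ 0 := by rw [← sub_eq_add_neg]; exact sub_ne_zero.mpr hne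
  have h2 := HahnSeries.min_order_le_order_add h
  rwa [HahnSeries.order_neg, ← sub_eq_add_neg] at h2

lemma diff_eq {a x1 y1 : LaurentSeries F} (hx1 : x1 ≠ 0) (hy1 : y1 ≠ 0) (hne : x1 ≠ y1) :
    ((a + x1⁻¹) - (a + y1⁻¹)).order = (y1 - x1).order - x1.order - y1.order := by
  have h1 : (a + x1⁻¹) - (a + y1⁻¹) = (y1 - x1) * (x1 * y1)⁻¹ := by
    field_simp
    ring
  rw [h1, HahnSeries.order_mul (sub_ne_zero.mpr hne.symm) (inv_ne_zero (mul_ne_zero hx1 hy1)),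
    order_inv (mul_ne_zero hx1 hy1), HahnSeries.order_mul hx1 hy1]
  ring

lemma cf_bound (n : ℕ) : ∀ (a x y : ℕ → LaurentSeries F),
    (∀ k, x k = a k + (x (k+1))⁻¹) → (∀ k, y k = a k + (y (k+1))⁻¹) →
    (∀ k, x k ≠ 0) → (∀ k, (x k).order < 0) →
    (∀ k, y k ≠ 0) → (∀ k, (y k).order < 0) →
    (∀ k, a k ≠ 0) → (∀ k, (a k).order < 0) →
    x 0 = y 0 ∨ -(a (n+1)).order ≤ (x 0 - y 0).order := by
  induction n with
  | zero =>
    intro a x y hx hy hx0 hxo hy0 hyo ha0 hao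
    by_cases h1 : x 1 = y 1
    · left; rw [hx 0, hy 0, h1]
    · right
      have hox1 : (x 1).order = (a 1).order := by
        rw [hx 1]; exact (order_add_inv (ha0 1) (hao 1) (hx0 2) (hxo 2)).2
      have hoy1 : (y 1).order = (a 1).order := by
        rw [hy 1]; exact (order_add_inv (ha0 1) (hao 1) (hy0 2) (hyo 2)).2
      have hmin := order_sub_ge (Ne.symm h1)
      rw [hoy1, hox1, min_self] at hmin
      rw [hx 0, hy 0, diff_eq (hx0 1) (hy0 1) h1, hox1, hoy1]
      simp only [zero_add]
      have := hao 1
      omega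
  | succ n ih =>
    intro a x y hx hy hx0 hxo hy0 hyo ha0 hao
    by_cases h1 : x 1 = y 1
    · left; rw [hx 0, hy 0, h1]
    · right
      have key := ih (fun k => a (k+1)) (fun k => x (k+1)) (fun k => y (k+1))
        (fun k => hx (k+1)) (fun k => hy (k+1)) (fun k => hx0 (k+1)) (fun k => hxo (k+1))
        (fun k => hy0 (k+1)) (fun k => hyo (k+1)) (fun k => ha0 (k+1)) (fun k => hao (k+1))
      simp only [zero_add] at key
      rcases key with h | h
      · exact absurd h h1
      have hox1 : (x 1).order = (a 1).order := by
        rw [hx 1]; exact (order_add_inv (ha0 1) (hao 1) (hx0 2) (hxo 2)).2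
      have hoy1 : (y 1).order = (a 1).order := by
        rw [hy 1]; exact (order_add_inv (ha0 1) (hao 1) (hy0 2) (hyo 2)).2
      have hor : (y 1 - x 1).order = (x 1 - y 1).order := by
        rw [← neg_sub (x 1) (y 1), HahnSeries.order_neg]
      rw [hx 0, hy 0, diff_eq (hx0 1) (hy0 1) h1, hor, hox1, hoy1]
      have := hao 1
      omega

end FrobCF

/-- `T = 1/X` in the Laurent series field `F((X)) = F_p((1/T))`. -/
noncomputable def Tvar (F : Type*) [Field F] : LaurentSeries F := HahnSeries.single (-1) 1

/-- `α` has infinite continued fraction expansion `[a 0, a 1, a 2, …]`. -/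
def HasCF {F : Type*} [Field F] (α : LaurentSeries F) (a : ℕ → LaurentSeries F) : Prop :=
  ∃ β : ℕ → LaurentSeries F, β 0 = α ∧ (∀ n, β n = a n + (β (n + 1))⁻¹) ∧
    ∀ n, 1 ≤ n → β n ≠ 0 ∧ (β n).order < 0

/-- If `α = [T, T^r, T^{r²}, …]` in `F_p((1/T))` with `r = p^t`, `t ≥ 1`,
then `α = T + 1/α^r`, i.e. `α^{r+1} - Tα^r - 1 = 0`. -/
theorem frobenius_cf (p : ℕ) [Fact p.Prime] (t : ℕ) (ht : 1 ≤ t) (r : ℕ) (hr : r = p ^ t)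
    (α : LaurentSeries (ZMod p)) (hα : HasCF α fun n => Tvar (ZMod p) ^ r ^ n) :
    α = Tvar (ZMod p) + (α ^ r)⁻¹ ∧ α ^ (r + 1) - Tvar (ZMod p) * α ^ r - 1 = 0 := by
  open FrobCF in
  obtain ⟨β, hβ0, hrec0, hcond⟩ := hα
  have hrec : ∀ n, β n = Tvar (ZMod p) ^ r ^ n + (β (n + 1))⁻¹ := hrec0
  set T := Tvar (ZMod p) with hTdef
  haveI : CharP (LaurentSeries (ZMod p)) p :=
    charP_of_injective_ringHom (HahnSeries.C_injective (Γ := ℤ)) p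
  have hp2 : 2 ≤ p := (Fact.out : p.Prime).two_le
  have hr2 : 2 ≤ r := by
    rw [hr]; calc 2 ≤ p := hp2
      _ = p ^ 1 := (pow_one p).symm
      _ ≤ p ^ t := Nat.pow_le_pow_right (by omega) ht
  have hT : T ≠ 0 := HahnSeries.single_ne_zero one_ne_zero
  have hTo : T.order = -1 := HahnSeries.order_single one_ne_zero
  have hTpow0 : ∀ m : ℕ, T ^ m ≠ 0 := fun m => pow_ne_zero _ hT
  have hTpow : ∀ m : ℕ, (T ^ m).order = -(m : ℤ) := by
    intro m
    rw [HahnSeries.order_pow, hTo, nsmul_eq_mul, mul_neg_one]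
  have hTpowo : ∀ m : ℕ, 1 ≤ m → (T ^ m).order < 0 := by
    intro m hm; rw [hTpow]; omega
  -- basic facts about β 0
  have hβ1 := hcond 1 le_rfl
  have hb0 := FrobCF.order_add_inv (a := T ^ r ^ 0) (b := β 1) (hTpow0 _)
    (hTpowo _ (Nat.one_le_pow _ _ (by omega))) hβ1.1 hβ1.2
  have hβ0ne : β 0 ≠ 0 := by rw [hrec 0]; exact hb0.1
  have hβ0o : (β 0).order < 0 := by
    rw [hrec 0, hb0.2]; exact hTpowo _ (Nat.one_le_pow _ _ (by omega))
  have hβne : ∀ n, β n ≠ 0 := by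
    intro n; cases n with
    | zero => exact hβ0ne
    | succ n => exact (hcond (n+1) (by omega)).1
  have hβo : ∀ n, (β n).order < 0 := by
    intro n; cases n with
    | zero => exact hβ0o
    | succ n => exact (hcond (n+1) (by omega)).2
  -- the Frobenius twist of β satisfies the shifted recurrence
  have hfrob : ∀ n, (β n) ^ r = T ^ r ^ (n+1) + ((β (n+1)) ^ r)⁻¹ := by
    intro n
    rw [hrec n, hr, add_pow_char_pow, ← pow_mul, inv_pow, ← pow_succ]
  -- uniqueness of continued fraction expansions: β 1 = (β 0) ^ r
  have hkey : β 1 = (β 0) ^ r := by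
    by_contra hcon
    set D : ℤ := (β 1 - (β 0) ^ r).order with hD
    have hbound : ∀ n : ℕ, ((r ^ (n + 1 + 1) : ℕ) : ℤ) ≤ D := by
      intro n
      have h := FrobCF.cf_bound n (fun k => T ^ r ^ (k+1)) (fun k => β (k+1))
        (fun k => (β k) ^ r)
        (fun k => hrec (k+1)) hfrob
        (fun k => hβne (k+1)) (fun k => hβo (k+1))
        (fun k => pow_ne_zero _ (hβne k))
        (fun k => by
          rw [HahnSeries.order_pow, nsmul_eq_mul]
          exact mul_neg_of_pos_of_neg (by exact_mod_cast (by omega : 0 < r)) (hβo k))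
        (fun k => hTpow0 _) (fun k => hTpowo _ (Nat.one_le_pow _ _ (by omega)))
      simp only [zero_add] at h
      rcases h with h | h
      · exact absurd h hcon
      · rw [hTpow] at h
        omega
    have hN := hbound D.toNat
    have h1 : D ≤ (D.toNat : ℤ) := Int.self_le_toNat D
    have h2 : D.toNat < r ^ (D.toNat + 1 + 1) :=
      lt_of_lt_of_le (Nat.lt_pow_self (n := D.toNat) (a := r) (by omega))
        (Nat.pow_le_pow_right (by omega) (by omega))
    omega
  -- conclude
  have hpart1' : β 0 = T + ((β 0) ^ r)⁻¹ := by
    conv_lhs => rw [hrec 0]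
    rw [hkey, pow_zero, pow_one]
  have hpart1 : α = T + (α ^ r)⁻¹ := hβ0 ▸ hpart1'
  refine ⟨hpart1, ?_⟩
  have hα0 : α ≠ 0 := hβ0 ▸ hβ0ne
  have h2 : α * α ^ r = T * α ^ r + 1 := by
    calc α * α ^ r = (T + (α ^ r)⁻¹) * α ^ r := by rw [← hpart1]
      _ = T * α ^ r + (α ^ r)⁻¹ * α ^ r := add_mul _ _ _
      _ = T * α ^ r + 1 := by rw [inv_mul_cancel₀ (pow_ne_zero _ hα0)]
  rw [pow_succ]
  linear_combination h2
end

section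
/- Let p be a prime, r = p^t with t ≥ 1, and let α ∈ F_p((1/T)) satisfy α = T + 1/α^r with |α| > 1. Then α is algebraic over F_p(T) of degree exactly r + 1. -/
open scoped RatFunc

open Polynomial

section Swap

variable {A : Type*} [CommRing A]

/-- The ring hom swapping the two variables of `A[X][Y]`. -/
noncomputable def swapHom : Polynomial (Polynomial A) →+* Polynomial (Polynomial A) :=
  eval₂RingHom (eval₂RingHom (Polynomial.C.comp Polynomial.C) Polynomial.X) (Polynomial.C Polynomial.X)

@[simp] lemma swapHom_CC (a : A) : swapHom (C (C a)) = C (C a) := by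
  simp [swapHom]

@[simp] lemma swapHom_CX : swapHom (C (X : Polynomial A)) = X := by
  simp [swapHom]

@[simp] lemma swapHom_X : swapHom (X : Polynomial (Polynomial A)) = C X := by
  simp [swapHom]

lemma swapHom_comp_swapHom :
    (swapHom.comp swapHom : Polynomial (Polynomial A) →+* Polynomial (Polynomial A)) =
      RingHom.id _ := by
  apply ringHom_ext
  · intro q
    have h : (swapHom.comp swapHom).comp (Polynomial.C : Polynomial A →+* Polynomial (Polynomial A))
        = (Polynomial.C : Polynomial A →+* Polynomial (Polynomial A)) := by
      apply ringHom_ext <;> simp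
    exact DFunLike.congr_fun h q
  · simp

/-- The swap as a ring equivalence. -/
noncomputable def swapEquiv : Polynomial (Polynomial A) ≃+* Polynomial (Polynomial A) :=
  RingEquiv.ofRingHom swapHom swapHom swapHom_comp_swapHom swapHom_comp_swapHom

end Swap

section Main

variable {A : Type*} [Field A] [DecidableEq A]

lemma irreducible_Q {r : ℕ} (hr : 1 ≤ r) :
    Irreducible ((C X) * X ^ (r + 1) - X ^ r - C X : Polynomial (Polynomial A)) := by
  set Q : Polynomial (Polynomial A) := (C X) * X ^ (r + 1) - X ^ r - C X with hQ
  set Q2 : Polynomial (Polynomial A) := C (X ^ (r + 1) - 1) * X - C (X ^ r) with hQ2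
  have hswap : swapEquiv Q2 = Q := by
    show swapHom Q2 = Q
    rw [hQ2, hQ]
    simp only [C_sub, C_pow, C_1, map_sub, map_mul, map_pow, map_one, swapHom_CX, swapHom_X]
    ring
  have hcop : IsCoprime ((X : Polynomial A) ^ (r + 1) - 1) (X ^ r) := by
    refine ⟨-1, X, ?_⟩
    ring
  have hQ2prim : Q2.IsPrimitive := by
    intro c hc
    rw [Polynomial.C_dvd_iff_dvd_coeff] at hc
    have e1 : Q2.coeff 1 = X ^ (r + 1) - 1 := by
      rw [hQ2, coeff_sub, coeff_C_mul, coeff_X_one, mul_one, coeff_C]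
      simp
    have e0 : Q2.coeff 0 = -(X ^ r) := by
      rw [hQ2, coeff_sub, coeff_C_mul, coeff_X_zero, mul_zero, coeff_C]
      simp
    have h1 : c ∣ (X : Polynomial A) ^ (r + 1) - 1 := e1 ▸ hc 1
    have h0 : c ∣ (X : Polynomial A) ^ r := dvd_neg.mp (e0 ▸ hc 0)
    exact hcop.isUnit_of_dvd' h1 h0
  have hQ2irr : Irreducible Q2 := by
    rw [hQ2prim.irreducible_iff_irreducible_map_fraction_map (K := RatFunc A)]
    apply irreducible_of_degree_eq_one
    have hnz : ((X : Polynomial A) ^ (r + 1) - 1) ≠ 0 := by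
      intro h
      have := congrArg (fun q => Polynomial.coeff q (r + 1)) h
      simp [coeff_one] at this
    have hne : algebraMap (Polynomial A) (RatFunc A) (X ^ (r + 1) - 1) ≠ 0 := by
      rwa [Ne, map_eq_zero_iff _ (IsFractionRing.injective _ _)]
    have hmap : Q2.map (algebraMap (Polynomial A) (RatFunc A)) =
        C (algebraMap (Polynomial A) (RatFunc A) (X ^ (r + 1) - 1)) * X +
          C (-(algebraMap (Polynomial A) (RatFunc A) (X ^ r))) := by
      rw [hQ2]
      simp only [Polynomial.map_sub, Polynomial.map_mul, Polynomial.map_C, Polynomial.map_X,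
        map_neg]
      ring
    rw [hmap, degree_linear hne]
  rw [← hswap]
  exact (MulEquiv.irreducible_iff (swapEquiv (A := A))).mpr hQ2irr

lemma irreducible_P {r : ℕ} (hr : 1 ≤ r) :
    Irreducible (X ^ (r + 1) - C ((RatFunc.X : RatFunc A)⁻¹) * X ^ r - 1 :
      Polynomial (RatFunc A)) := by
  have hx : (RatFunc.X : RatFunc A) ≠ 0 := RatFunc.X_ne_zero
  set Q : Polynomial (Polynomial A) := (C X) * X ^ (r + 1) - X ^ r - C X with hQ
  have hQprim : Q.IsPrimitive := by
    intro c hc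
    rw [Polynomial.C_dvd_iff_dvd_coeff] at hc
    have er : Q.coeff r = -1 := by
      have h1 : ¬ r = r + 1 := by omega
      have h2 : ¬ r = 0 := by omega
      rw [hQ]
      simp [coeff_X_pow, coeff_C, h1, h2]
    exact isUnit_of_dvd_one (dvd_neg.mp (er ▸ hc r))
  have hQirr : Irreducible Q := irreducible_Q hr
  have hQmapirr : Irreducible (Q.map (algebraMap (Polynomial A) (RatFunc A))) :=
    (hQprim.irreducible_iff_irreducible_map_fraction_map (K := RatFunc A)).mp hQirr
  have hmap : Q.map (algebraMap (Polynomial A) (RatFunc A)) =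
      C (RatFunc.X : RatFunc A) * X ^ (r + 1) - X ^ r - C (RatFunc.X : RatFunc A) := by
    rw [hQ]
    simp [Polynomial.map_sub, Polynomial.map_mul, Polynomial.map_C, Polynomial.map_X,
      Polynomial.map_pow, RatFunc.algebraMap_X]
  have hP : (X ^ (r + 1) - C ((RatFunc.X : RatFunc A)⁻¹) * X ^ r - 1 : Polynomial (RatFunc A)) =
      C ((RatFunc.X : RatFunc A)⁻¹) * Q.map (algebraMap (Polynomial A) (RatFunc A)) := by
    rw [hmap, mul_sub, mul_sub, ← mul_assoc, ← C_mul, inv_mul_cancel₀ hx, C_1, one_mul]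
  rw [hP]
  have hu : IsUnit (C ((RatFunc.X : RatFunc A)⁻¹)) :=
    isUnit_C.mpr (isUnit_iff_ne_zero.mpr (inv_ne_zero hx))
  exact Associated.irreducible ⟨hu.unit, by rw [hu.unit_spec]; ring⟩ hQmapirr

end Main

/-- If `α ∈ F_p((1/T))` satisfies `α = T + 1/α^r` with `|α| > 1` (negative order as a series
in `1/T`), `r = p^t`, `t ≥ 1`, then `α` is algebraic of degree exactly `r + 1` over `F_p(T)`. -/
theorem degree_of_frobenius_root (p : ℕ) [Fact p.Prime] (t : ℕ) (ht : 1 ≤ t)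
    (r : ℕ) (hr : r = p ^ t) (α : LaurentSeries (ZMod p))
    (hα : α = Tvar (ZMod p) + (α ^ r)⁻¹) (hord : α ≠ 0 ∧ α.order < 0) :
    IsAlgebraic (RatFunc (ZMod p)) α ∧
      (minpoly (RatFunc (ZMod p)) α).natDegree = r + 1 := by
  have hp2 : 2 ≤ p := (Fact.out : p.Prime).two_le
  have hr1 : 1 ≤ r := by
    rw [hr]
    exact Nat.one_le_pow _ _ (by omega)
  set K := RatFunc (ZMod p)
  set x : K := RatFunc.X with hxdef
  have hx : x ≠ 0 := RatFunc.X_ne_zero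
  set P : Polynomial K := X ^ (r + 1) - C (x⁻¹) * X ^ r - 1 with hPdef
  -- monicity and degree
  have hdeg_small : (C (x⁻¹) * X ^ r + 1 : Polynomial K).degree < (r + 1 : ℕ) := by
    apply lt_of_le_of_lt (degree_add_le _ _)
    rw [max_lt_iff]
    constructor
    · exact lt_of_le_of_lt (degree_C_mul_X_pow_le _ _) (by exact_mod_cast Nat.lt_succ_self r)
    · exact lt_of_le_of_lt degree_one_le (by exact_mod_cast Nat.succ_pos r)
  have hPeq : P = X ^ (r + 1) - (C (x⁻¹) * X ^ r + 1) := by rw [hPdef]; ring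
  have hmon : P.Monic := by
    rw [hPeq]
    exact monic_X_pow_sub hdeg_small
  have hdegP : P.degree = (r + 1 : ℕ) := by
    rw [hPeq, degree_sub_eq_left_of_degree_lt (by rwa [degree_X_pow]), degree_X_pow]
  -- the root
  have hxmap : (algebraMap K (LaurentSeries (ZMod p))) x = HahnSeries.single 1 1 :=
    RatFunc.coe_X
  have haeval : (Polynomial.aeval α) P = 0 := by
    have hTvar : (algebraMap K (LaurentSeries (ZMod p))) x⁻¹ = Tvar (ZMod p) := by
      rw [map_inv₀, hxmap, Tvar, HahnSeries.inv_single (1 : ℤ) (1 : ZMod p), inv_one]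
    rw [hPdef]
    simp only [map_sub, map_mul, map_pow, map_one, aeval_X, aeval_C, hTvar]
    have hαr : (α : LaurentSeries (ZMod p)) ^ r ≠ 0 := pow_ne_zero _ hord.1
    have h1 : α - Tvar (ZMod p) = (α ^ r)⁻¹ := sub_eq_iff_eq_add'.mpr hα
    have h2 : (α - Tvar (ZMod p)) * α ^ r = 1 := by
      rw [h1, inv_mul_cancel₀ hαr]
    linear_combination h2
  have hirr : Irreducible P := irreducible_P hr1
  have hminpoly : P = minpoly K α := minpoly.eq_of_irreducible_of_monic hirr haeval hmon
  constructor
  · exact ⟨P, hmon.ne_zero, haeval⟩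
  · rw [← hminpoly]
    have := hdegP
    rw [degree_eq_natDegree hmon.ne_zero] at this
    exact_mod_cast this
end

section
/- Let p > 3 be a prime, q a power of p, and let A, B, C ∈ F_q(T) satisfy 12A + C^2 = 0 with A ≠ 0. Set P(X) = AX^4 + BX^3 + CX^2 + 1 ∈ F_q(T)[X], and let r = p if p ≡ 1 mod 3 and r = p^2 if p ≡ 2 mod 3. Then there exist U, V, W, Z ∈ F_q(T), not all zero, with H(X) = UX^{r+1} + VX^r + WX + Z not identically zero, such that P(X) divides H(X) in F_q(T)[X]. -/
open Polynomial

/-- Detect a triple root: a quartic with roots `s, s, t, u` satisfying the two constraints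
(vanishing of the coefficient of `X` and of the invariant `I = 12 e₄ + e₂²`) must have a
third root equal to `s`. -/
lemma bl_triple_of_eq {L : Type*} [Field L] (s t u : L)
    (he3 : s*s*t + s*s*u + s*t*u + s*t*u = 0)
    (hI : 12*(s*s*t*u) + (s*s + s*t + s*u + s*t + s*u + t*u)^2 = 0) :
    t = s ∨ u = s := by
  have h : ((t-s)*(u-s))^2 = 0 := by linear_combination (-3*t-3*u-6*s)*he3 + hI
  have h2 := pow_eq_zero_iff (n := 2) (by norm_num) |>.mp h
  rcases mul_eq_zero.mp h2 with h3 | h3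
  · exact Or.inl (sub_eq_zero.mp h3)
  · exact Or.inr (sub_eq_zero.mp h3)

/-- A polynomial vanishing at four distinct points is divisible by the corresponding
product of linear factors. -/
lemma bl_prod_four_dvd {L : Type*} [Field L] {a b c d : L} (hab : a ≠ b) (hac : a ≠ c)
    (had : a ≠ d) (hbc : b ≠ c) (hbd : b ≠ d) (hcd : c ≠ d) {G : L[X]}
    (ha : G.eval a = 0) (hb : G.eval b = 0) (hc : G.eval c = 0) (hd : G.eval d = 0) :
    (X - C a) * (X - C b) * (X - C c) * (X - C d) ∣ G := by
  obtain ⟨G1, rfl⟩ := (dvd_iff_isRoot (p := G) (a := a)).mpr ha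
  have hb1 : G1.eval b = 0 := by
    have := hb; simp only [eval_mul, eval_sub, eval_X, eval_C] at this
    rcases mul_eq_zero.mp this with h | h
    · exact absurd (sub_eq_zero.mp h) (Ne.symm hab)
    · exact h
  obtain ⟨G2, rfl⟩ := (dvd_iff_isRoot (p := G1) (a := b)).mpr hb1
  have hc1 : G2.eval c = 0 := by
    have := hc; simp only [eval_mul, eval_sub, eval_X, eval_C] at this
    rcases mul_eq_zero.mp this with h | h
    · exact absurd (sub_eq_zero.mp h) (Ne.symm hac)
    rcases mul_eq_zero.mp h with h' | h'
    · exact absurd (sub_eq_zero.mp h') (Ne.symm hbc)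
    · exact h'
  obtain ⟨G3, rfl⟩ := (dvd_iff_isRoot (p := G2) (a := c)).mpr hc1
  have hd1 : G3.eval d = 0 := by
    have := hd; simp only [eval_mul, eval_sub, eval_X, eval_C] at this
    rcases mul_eq_zero.mp this with h | h
    · exact absurd (sub_eq_zero.mp h) (Ne.symm had)
    rcases mul_eq_zero.mp h with h' | h'
    · exact absurd (sub_eq_zero.mp h') (Ne.symm hbd)
    rcases mul_eq_zero.mp h' with h'' | h''
    · exact absurd (sub_eq_zero.mp h'') (Ne.symm hcd)
    · exact h''
  obtain ⟨G4, rfl⟩ := (dvd_iff_isRoot (p := G3) (a := d)).mpr hd1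
  exact ⟨G4, by ring⟩

section KeyL
variable {L : Type*} [Field L] (p : ℕ) [Fact p.Prime] [CharP L p]

/-- The triple root case of the key lemma. -/
lemma bl_key_triple (k r : ℕ) (hrk : r = p ^ k) (hr5 : 5 ≤ r) (s x : L) :
    ∃ v : Fin 4 → L, v ≠ 0 ∧ (X - C s) * (X - C s) * (X - C s) * (X - C x) ∣
      (C (v 0) * X ^ (r+1) + C (v 1) * X ^ r + C (v 2) * X + C (v 3)) := by
  refine ⟨![1, -x, -(s^r), s^r * x], ?_, ?_⟩
  · intro h
    have := congrFun h 0
    simp at this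
  · have hfr : (X - C s) ^ r = X ^ r - C (s ^ r) := by
      rw [hrk, sub_pow_char_pow, ← map_pow]
    have hG : C (1:L) * X ^ (r+1) + C (-x) * X ^ r + C (-(s^r)) * X + C (s^r * x)
        = (X - C s) ^ r * (X - C x) := by
      rw [hfr]
      simp only [map_neg, map_mul, map_one]
      ring
    have hpow : (X - C s) ^ r = (X - C s) ^ 3 * (X - C s) ^ (r - 3) := by
      rw [← pow_add]; congr 1; omega
    refine ⟨(X - C s) ^ (r - 3), ?_⟩
    show C (![1, -x, -(s^r), s^r * x] 0) * X ^ (r+1)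
        + C (![1, -x, -(s^r), s^r * x] 1) * X ^ r
        + C (![1, -x, -(s^r), s^r * x] 2) * X + C (![1, -x, -(s^r), s^r * x] 3) = _
    simp only [Matrix.cons_val_zero, Matrix.cons_val_one, Matrix.head_cons,
      Matrix.cons_val_two, Matrix.tail_cons, Matrix.cons_val_three]
    rw [hG, hpow]
    ring

/-- The cross-ratio/Frobenius relation for an equianharmonic quadruple. -/
lemma bl_hkey_of (k m : ℕ) (hrm : p ^ k = 6*m+1) (a1 a2 a3 a4 : L)
    (he3 : a1*a2*a3 + a1*a2*a4 + a1*a3*a4 + a2*a3*a4 = 0)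
    (hI : 12*(a1*a2*a3*a4) + (a1*a2 + a1*a3 + a1*a4 + a2*a3 + a2*a4 + a3*a4)^2 = 0) :
    (a1-a3)*(a2-a4) * ((a1^p^k - a4^p^k)*(a2^p^k - a3^p^k))
      = (a1-a4)*(a2-a3) * ((a1^p^k - a3^p^k)*(a2^p^k - a4^p^k)) := by
  have hE : ((a1-a3)*(a2-a4))^2 - ((a1-a3)*(a2-a4))*((a1-a4)*(a2-a3))
      + ((a1-a4)*(a2-a3))^2 = 0 := by
    linear_combination hI - 3*(a1+a2+a3+a4)*he3
  have hcube : ((a1-a3)*(a2-a4))^3 = -((a1-a4)*(a2-a3))^3 := by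
    linear_combination ((a1-a3)*(a2-a4) + (a1-a4)*(a2-a3)) * hE
  have h6 : ∀ x : L, x ^ p ^ k = ((x^3)^2)^m * x := by
    intro x
    rw [hrm, show 6*m+1 = 3*2*m+1 from by ring, pow_succ, pow_mul, pow_mul]
  have hzz : ((a1-a3)*(a2-a4))^p^k * ((a1-a4)*(a2-a3))
      = ((a1-a4)*(a2-a3))^p^k * ((a1-a3)*(a2-a4)) := by
    rw [h6, h6, hcube]
    ring
  have hw2 : ((a1-a3)*(a2-a4))^p^k = (a1^p^k - a3^p^k)*(a2^p^k - a4^p^k) := by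
    rw [mul_pow, sub_pow_char_pow, sub_pow_char_pow]
  have hw3 : ((a1-a4)*(a2-a3))^p^k = (a1^p^k - a4^p^k)*(a2^p^k - a3^p^k) := by
    rw [mul_pow, sub_pow_char_pow, sub_pow_char_pow]
  rw [← hw2, ← hw3]
  linear_combination -hzz

/-- The distinct roots case of the key lemma. -/
lemma bl_key_distinct (k m : ℕ) (hrm : p ^ k = 6*m+1) (a1 a2 a3 a4 : L)
    (he3 : a1*a2*a3 + a1*a2*a4 + a1*a3*a4 + a2*a3*a4 = 0)
    (hI : 12*(a1*a2*a3*a4) + (a1*a2 + a1*a3 + a1*a4 + a2*a3 + a2*a4 + a3*a4)^2 = 0)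
    (h12 : a1 ≠ a2) (h13 : a1 ≠ a3) (h14 : a1 ≠ a4) (h23 : a2 ≠ a3) (h24 : a2 ≠ a4)
    (h34 : a3 ≠ a4) :
    ∃ v : Fin 4 → L, v ≠ 0 ∧ (X - C a1) * (X - C a2) * (X - C a3) * (X - C a4) ∣
      (C (v 0) * X ^ (p^k+1) + C (v 1) * X ^ (p^k) + C (v 2) * X + C (v 3)) := by
  have hkey := bl_hkey_of p k m hrm a1 a2 a3 a4 he3 hI
  set b1 := a1 ^ p ^ k with hb1
  set b2 := a2 ^ p ^ k with hb2
  set b3 := a3 ^ p ^ k with hb3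
  set b4 := a4 ^ p ^ k with hb4
  have hdet : (Matrix.of ![![a1*b1, b1, a1, 1], ![a2*b2, b2, a2, 1], ![a3*b3, b3, a3, 1],
      ![a4*b4, b4, a4, 1]]).det = 0 := by
    simp [Matrix.det_succ_row_zero, Fin.sum_univ_succ, Fin.succAbove,
      Fin.castSucc, Fin.castAdd, Fin.castLE]
    linear_combination hkey
  obtain ⟨v, hv, hMv⟩ := Matrix.exists_mulVec_eq_zero_iff.mpr hdet
  have h1 := congrFun hMv 0
  have h2 := congrFun hMv 1
  have h3 := congrFun hMv 2
  have h4 := congrFun hMv 3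
  simp [Matrix.mulVec, dotProduct, Fin.sum_univ_four] at h1 h2 h3 h4
  refine ⟨v, hv, ?_⟩
  apply bl_prod_four_dvd h12 h13 h14 h23 h24 h34 <;>
    simp only [eval_add, eval_mul, eval_pow, eval_C, eval_X, pow_succ]
  · linear_combination h1
  · linear_combination h2
  · linear_combination h3
  · linear_combination h4

set_option maxHeartbeats 800000 in
/-- The degenerate (repeated root) case of the key lemma. -/
lemma bl_key_degenerate (k : ℕ) (hr5 : 5 ≤ p ^ k) (a1 a2 a3 a4 : L)
    (he3 : a1*a2*a3 + a1*a2*a4 + a1*a3*a4 + a2*a3*a4 = 0)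
    (hI : 12*(a1*a2*a3*a4) + (a1*a2 + a1*a3 + a1*a4 + a2*a3 + a2*a4 + a3*a4)^2 = 0)
    (hne : a1 = a2 ∨ a1 = a3 ∨ a1 = a4 ∨ a2 = a3 ∨ a2 = a4 ∨ a3 = a4) :
    ∃ v : Fin 4 → L, v ≠ 0 ∧ (X - C a1) * (X - C a2) * (X - C a3) * (X - C a4) ∣
      (C (v 0) * X ^ (p^k+1) + C (v 1) * X ^ (p^k) + C (v 2) * X + C (v 3)) := by
  have key : ∀ s x : L, (X - C a1) * (X - C a2) * (X - C a3) * (X - C a4)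
      = (X - C s) * (X - C s) * (X - C s) * (X - C x) →
      ∃ v : Fin 4 → L, v ≠ 0 ∧ (X - C a1) * (X - C a2) * (X - C a3) * (X - C a4) ∣
        (C (v 0) * X ^ (p^k+1) + C (v 1) * X ^ (p^k) + C (v 2) * X + C (v 3)) := by
    intro s x h
    obtain ⟨v, hv, hdvd⟩ := bl_key_triple p k (p^k) rfl hr5 s x
    exact ⟨v, hv, h ▸ hdvd⟩
  rcases hne with h | h | h | h | h | h
  · rcases bl_triple_of_eq a1 a3 a4 (by rw [← h] at he3; linear_combination he3)
      (by rw [← h] at hI; linear_combination hI) with h' | h'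
    · exact key a1 a4 (by rw [h', ← h]; try ring)
    · exact key a1 a3 (by rw [h', ← h]; try ring)
  · rcases bl_triple_of_eq a1 a2 a4 (by rw [← h] at he3; linear_combination he3)
      (by rw [← h] at hI; linear_combination hI) with h' | h'
    · exact key a1 a4 (by rw [h', ← h]; try ring)
    · exact key a1 a2 (by rw [h', ← h]; try ring)
  · rcases bl_triple_of_eq a1 a2 a3 (by rw [← h] at he3; linear_combination he3)
      (by rw [← h] at hI; linear_combination hI) with h' | h'
    · exact key a1 a3 (by rw [h', ← h]; try ring)
    · exact key a1 a2 (by rw [h', ← h]; try ring)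
  · rcases bl_triple_of_eq a2 a1 a4 (by rw [← h] at he3; linear_combination he3)
      (by rw [← h] at hI; linear_combination hI) with h' | h'
    · exact key a2 a4 (by rw [h', ← h]; try ring)
    · exact key a2 a1 (by rw [h', ← h]; try ring)
  · rcases bl_triple_of_eq a2 a1 a3 (by rw [← h] at he3; linear_combination he3)
      (by rw [← h] at hI; linear_combination hI) with h' | h'
    · exact key a2 a3 (by rw [h', ← h]; try ring)
    · exact key a2 a1 (by rw [h', ← h]; try ring)
  · rcases bl_triple_of_eq a3 a1 a2 (by rw [← h] at he3; linear_combination he3)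
      (by rw [← h] at hI; linear_combination hI) with h' | h'
    · exact key a3 a2 (by rw [h', ← h]; try ring)
    · exact key a3 a1 (by rw [h', ← h]; try ring)

/-- Key lemma over the splitting field. -/
lemma bl_key_L (k m : ℕ) (hrm : p ^ k = 6*m+1) (hr5 : 5 ≤ p ^ k) (a1 a2 a3 a4 : L)
    (he3 : a1*a2*a3 + a1*a2*a4 + a1*a3*a4 + a2*a3*a4 = 0)
    (hI : 12*(a1*a2*a3*a4) + (a1*a2 + a1*a3 + a1*a4 + a2*a3 + a2*a4 + a3*a4)^2 = 0) :
    ∃ v : Fin 4 → L, v ≠ 0 ∧ (X - C a1) * (X - C a2) * (X - C a3) * (X - C a4) ∣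
      (C (v 0) * X ^ (p^k+1) + C (v 1) * X ^ (p^k) + C (v 2) * X + C (v 3)) := by
  have hdec : (a1 = a2 ∨ a1 = a3 ∨ a1 = a4 ∨ a2 = a3 ∨ a2 = a4 ∨ a3 = a4) ∨
      (a1 ≠ a2 ∧ a1 ≠ a3 ∧ a1 ≠ a4 ∧ a2 ≠ a3 ∧ a2 ≠ a4 ∧ a3 ≠ a4) := by tauto
  rcases hdec with h | ⟨h12, h13, h14, h23, h24, h34⟩
  · exact bl_key_degenerate p k hr5 a1 a2 a3 a4 he3 hI h
  · exact bl_key_distinct p k m hrm a1 a2 a3 a4 he3 hI h12 h13 h14 h23 h24 h34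

end KeyL

/-- The coefficient matrix of the reductions of `X^{r+1}, X^r, X, 1` modulo a monic quartic. -/
noncomputable def blMatOf {F : Type*} [Field F] (Q : F[X]) (r : ℕ) : Matrix (Fin 4) (Fin 4) F :=
  Matrix.of fun i j => ((X : F[X]) ^ (![r+1, r, 1, 0] j) %ₘ Q).coeff i

lemma bl_dvd_iff_mulVec {F : Type*} [Field F] {Q : F[X]} (hQ : Q.Monic) (hdeg : Q.natDegree = 4)
    (r : ℕ) (v : Fin 4 → F) :
    Q ∣ (C (v 0) * X ^ (r+1) + C (v 1) * X ^ r + C (v 2) * X + C (v 3)) ↔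
      (blMatOf Q r).mulVec v = 0 := by
  have hQdeg : Q.degree = (4 : ℕ) := by
    rw [degree_eq_natDegree hQ.ne_zero, hdeg]
  rw [← modByMonic_eq_zero_iff_dvd hQ]
  have hsplit : (C (v 0) * X ^ (r+1) + C (v 1) * X ^ r + C (v 2) * X + C (v 3)) %ₘ Q
      = v 0 • ((X:F[X]) ^ (r+1) %ₘ Q) + v 1 • ((X:F[X]) ^ r %ₘ Q)
        + v 2 • ((X:F[X]) ^ 1 %ₘ Q) + v 3 • ((X:F[X]) ^ 0 %ₘ Q) := by
    rw [← smul_modByMonic, ← smul_modByMonic, ← smul_modByMonic, ← smul_modByMonic,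
      ← add_modByMonic, ← add_modByMonic, ← add_modByMonic]
    congr 1
    simp [smul_eq_C_mul]
  rw [hsplit]
  set R := v 0 • ((X:F[X]) ^ (r+1) %ₘ Q) + v 1 • ((X:F[X]) ^ r %ₘ Q)
        + v 2 • ((X:F[X]) ^ 1 %ₘ Q) + v 3 • ((X:F[X]) ^ 0 %ₘ Q) with hR
  have hcoeff : ∀ i : Fin 4, R.coeff i = (blMatOf Q r).mulVec v i := by
    intro i
    simp only [hR, coeff_add, coeff_smul, Matrix.mulVec, dotProduct,
      Fin.sum_univ_four, blMatOf, Matrix.of_apply, smul_eq_mul]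
    simp
    ring
  have hdegR : R.degree < (4 : ℕ) := by
    have t : ∀ (c : F) (n : ℕ), (c • ((X:F[X]) ^ n %ₘ Q)).degree < (4:ℕ) := fun c n =>
      lt_of_le_of_lt (degree_smul_le _ _) (hQdeg ▸ degree_modByMonic_lt _ hQ)
    refine lt_of_le_of_lt (degree_add_le _ _) (max_lt (lt_of_le_of_lt (degree_add_le _ _)
      (max_lt (lt_of_le_of_lt (degree_add_le _ _) (max_lt (t _ _) (t _ _))) (t _ _))) (t _ _))
  constructor
  · intro h
    funext i
    rw [Pi.zero_apply, ← hcoeff i, h, coeff_zero]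
  · intro h
    ext n
    rcases lt_or_ge n 4 with hn | hn
    · have := hcoeff ⟨n, hn⟩
      rw [h] at this
      simpa using this
    · rw [coeff_zero]
      refine coeff_eq_zero_of_degree_lt (lt_of_lt_of_le hdegR ?_)
      exact_mod_cast Nat.cast_le.mpr hn

lemma bl_matOf_map {F L : Type*} [Field F] [Field L] (f : F →+* L) {Q : F[X]} (hQ : Q.Monic)
    (r : ℕ) : blMatOf (Q.map f) r = (blMatOf Q r).map f := by
  ext i j
  simp only [blMatOf, Matrix.of_apply, Matrix.map_apply]
  rw [← coeff_map, map_modByMonic f hQ, Polynomial.map_pow, map_X]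

lemma bl_multiset_four {α : Type*} {s : Multiset α} (h : Multiset.card s = 4) :
    ∃ a b c d : α, s = {a, b, c, d} := by
  have hco : (↑s.toList : Multiset α) = s := s.coe_toList
  have hlen : s.toList.length = 4 := by rw [Multiset.length_toList, h]
  rcases hl : s.toList with _ | ⟨a, _ | ⟨b, _ | ⟨c, _ | ⟨d, _ | e⟩⟩⟩⟩ <;>
    rw [hl] at hlen <;> simp at hlen
  refine ⟨a, b, c, d, ?_⟩
  rw [← hco, hl]
  rfl

/-- (Bluher–Lasjaunias) Let `p > 3`, `A, B, C ∈ F_q(T)` with `12A + C² = 0`, `A ≠ 0`, and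
`P(X) = AX⁴ + BX³ + CX² + 1`. With `r = p` if `p ≡ 1 mod 3` and `r = p²` if `p ≡ 2 mod 3`,
`P` divides a nonzero polynomial of the form `UX^{r+1} + VX^r + WX + Z`. -/
theorem quartic_divides_hyperquadratic (Fq : Type*) [Field Fq]
    (p : ℕ) [Fact p.Prime] [CharP Fq p] (hp : 3 < p)
    (A B C : RatFunc Fq) (hA : A ≠ 0) (hAC : 12 * A + C ^ 2 = 0)
    (r : ℕ) (hr : r = if p % 3 = 1 then p else p ^ 2) :
    ∃ U V W Z : RatFunc Fq,
      (Polynomial.C U * X ^ (r + 1) + Polynomial.C V * X ^ r +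
          Polynomial.C W * X + Polynomial.C Z : Polynomial (RatFunc Fq)) ≠ 0 ∧
      (Polynomial.C A * X ^ 4 + Polynomial.C B * X ^ 3 + Polynomial.C C * X ^ 2 + 1) ∣
        (Polynomial.C U * X ^ (r + 1) + Polynomial.C V * X ^ r +
          Polynomial.C W * X + Polynomial.C Z) := by
  classical
  have hprime : p.Prime := Fact.out
  have hp2 : p % 2 = 1 := Nat.odd_iff.mp (hprime.odd_of_ne_two (by omega))
  have hp3 : p % 3 ≠ 0 := by
    intro h
    rcases hprime.eq_one_or_self_of_dvd 3 (Nat.dvd_of_mod_eq_zero h) with h' | h' <;> omega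
  obtain ⟨k, m, hk0, hk, hm⟩ : ∃ k m : ℕ, k ≠ 0 ∧ r = p ^ k ∧ p ^ k = 6 * m + 1 := by
    by_cases h1 : p % 3 = 1
    · refine ⟨1, p / 6, one_ne_zero, by rw [hr, if_pos h1, pow_one], ?_⟩
      rw [pow_one]; omega
    · have h2 : p % 3 = 2 := by omega
      obtain ⟨j, hj⟩ : ∃ j, p = 6 * j + 5 := ⟨p / 6, by omega⟩
      refine ⟨2, 6*j*j + 10*j + 4, two_ne_zero, by rw [hr, if_neg h1], ?_⟩
      rw [hj]; ring
  have hr5 : 5 ≤ p ^ k := le_trans (by omega : 5 ≤ p) (Nat.le_self_pow hk0 p)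
  haveI : CharP (RatFunc Fq) p :=
    charP_of_injective_algebraMap (algebraMap Fq (RatFunc Fq)).injective p
  set P₁ : (RatFunc Fq)[X] :=
    X^4 + Polynomial.C (B/A) * X^3 + Polynomial.C (C/A) * X^2 + Polynomial.C (1/A) with hP₁def
  have hmonic : P₁.Monic := by
    have h : (Polynomial.C (B/A) * X^3 + Polynomial.C (C/A) * X^2 + Polynomial.C (1/A) :
        (RatFunc Fq)[X]).degree < 4 := by
      have h' : (Polynomial.C (B/A) * X^3 + Polynomial.C (C/A) * X^2 + Polynomial.C (1/A) :
          (RatFunc Fq)[X]).degree ≤ 3 := by compute_degree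
      exact lt_of_le_of_lt h' (by norm_num)
    have := monic_X_pow_add (n := 4) h
    simpa [hP₁def, add_assoc] using this
  have hnd : P₁.natDegree = 4 := by rw [hP₁def]; compute_degree!
  have hCB : Polynomial.C A * Polynomial.C (B / A) = Polynomial.C B := by
    rw [← map_mul]; congr 1; field_simp
  have hCC : Polynomial.C A * Polynomial.C (C / A) = Polynomial.C C := by
    rw [← map_mul]; congr 1; field_simp
  have hC1 : Polynomial.C A * Polynomial.C (1 / A) = 1 := by
    rw [← map_mul, mul_one_div, div_self hA, map_one]
  have hP : Polynomial.C A * P₁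
      = Polynomial.C A * X ^ 4 + Polynomial.C B * X ^ 3 + Polynomial.C C * X ^ 2 + 1 := by
    rw [hP₁def, mul_add, mul_add, mul_add, ← mul_assoc, ← mul_assoc, hCB, hCC, hC1]
  set L := P₁.SplittingField with hLdef
  haveI : CharP L p :=
    charP_of_injective_algebraMap (algebraMap (RatFunc Fq) L).injective p
  set ι := algebraMap (RatFunc Fq) L with hidef
  set Q := P₁.map ι with hQdef
  have hQmonic : Q.Monic := hmonic.map ι
  have hQdeg : Q.natDegree = 4 := by rw [hQdef, hmonic.natDegree_map]; exact hnd
  have hsp : Q.Splits := SplittingField.splits P₁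
  have hprod := hsp.eq_prod_roots_of_monic hQmonic
  have hcard : Multiset.card Q.roots = 4 := by
    have h := hsp.natDegree_eq_card_roots
    rw [← h, hQdeg]
  obtain ⟨a1, a2, a3, a4, hms⟩ := bl_multiset_four hcard
  have hQprod : Q = (X - Polynomial.C a1) * (X - Polynomial.C a2) * (X - Polynomial.C a3)
      * (X - Polynomial.C a4) := by
    rw [hprod, hms]
    simp [Multiset.map_cons, Multiset.prod_cons]
    ring
  have hQmap : Q = X^4 + Polynomial.C (ι (B/A)) * X^3 + Polynomial.C (ι (C/A)) * X^2
      + Polynomial.C (ι (1/A)) := by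
    simp only [hQdef, hP₁def]
    simp [Polynomial.map_add, Polynomial.map_mul, Polynomial.map_pow]
  have hexp : (X - Polynomial.C a1) * (X - Polynomial.C a2) * (X - Polynomial.C a3)
      * (X - Polynomial.C a4)
      = X^4 - Polynomial.C (a1+a2+a3+a4) * X^3
        + Polynomial.C (a1*a2+a1*a3+a1*a4+a2*a3+a2*a4+a3*a4) * X^2
        - Polynomial.C (a1*a2*a3+a1*a2*a4+a1*a3*a4+a2*a3*a4) * X
        + Polynomial.C (a1*a2*a3*a4) := by
    simp only [map_add, map_mul]
    ring
  have heq := hQmap.symm.trans (hQprod.trans hexp)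
  have hc1 := congrArg (fun f => Polynomial.coeff f 1) heq
  have hc2 := congrArg (fun f => Polynomial.coeff f 2) heq
  have hc0 := congrArg (fun f => Polynomial.coeff f 0) heq
  simp only [coeff_add, coeff_sub, coeff_C_mul, coeff_X_pow, coeff_C, coeff_X] at hc1 hc2 hc0
  norm_num at hc1 hc2 hc0
  have he3L : a1*a2*a3 + a1*a2*a4 + a1*a3*a4 + a2*a3*a4 = 0 := by linear_combination hc1
  have hKI : 12 * (1/A) + (C/A)^2 = 0 := by
    have h' : 12 * (1/A) + (C/A)^2 = (12*A + C^2)/A^2 := by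
      field_simp
    rw [h', hAC, zero_div]
  have hIL : 12*(a1*a2*a3*a4) + (a1*a2 + a1*a3 + a1*a4 + a2*a3 + a2*a4 + a3*a4)^2 = 0 := by
    have h := congrArg ι hKI
    simp only [map_add, map_mul, map_pow, map_ofNat, map_zero, map_one, map_div₀] at h
    rw [one_div] at h
    rw [hc0, hc2] at h
    linear_combination h
  obtain ⟨v', hv'ne, hdvdL⟩ := bl_key_L p k m hm hr5 a1 a2 a3 a4 he3L hIL
  rw [← hk, ← hQprod] at hdvdL
  have hMv' : (blMatOf Q r).mulVec v' = 0 := (bl_dvd_iff_mulVec hQmonic hQdeg r v').mp hdvdL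
  have hdetL : (blMatOf Q r).det = 0 := Matrix.exists_mulVec_eq_zero_iff.mp ⟨v', hv'ne, hMv'⟩
  have hdetK : (blMatOf P₁ r).det = 0 := by
    apply ι.injective
    rw [RingHom.map_det, map_zero, RingHom.mapMatrix_apply]
    rw [← bl_matOf_map ι hmonic r]
    exact hdetL
  obtain ⟨v, hvne, hMv⟩ := Matrix.exists_mulVec_eq_zero_iff.mpr hdetK
  have hdvdK : P₁ ∣ (Polynomial.C (v 0) * X ^ (r+1) + Polynomial.C (v 1) * X ^ r
      + Polynomial.C (v 2) * X + Polynomial.C (v 3)) :=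
    (bl_dvd_iff_mulVec hmonic hnd r v).mpr hMv
  have hr5' : 5 ≤ r := by rw [hk]; exact hr5
  refine ⟨v 0, v 1, v 2, v 3, ?_, ?_⟩
  · intro h0
    apply hvne
    funext i
    have e0 := congrArg (fun f => Polynomial.coeff f (r+1)) h0
    have e1 := congrArg (fun f => Polynomial.coeff f r) h0
    have e2 := congrArg (fun f => Polynomial.coeff f 1) h0
    have e3 := congrArg (fun f => Polynomial.coeff f 0) h0
    simp only [coeff_add, coeff_C_mul, coeff_X_pow, coeff_C, coeff_X, coeff_zero] at e0 e1 e2 e3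
    simp only [(by omega : ¬(r+1 = r)), (by omega : ¬(1 = r+1)), (by omega : ¬(r+1 = 0)),
      (by omega : ¬(r = r+1)), (by omega : ¬(1 = r)), (by omega : ¬(r = 0)),
      (by omega : ¬(r+1 = 1)), (by omega : ¬(r = 1)), if_true, if_false, eq_self_iff_true,
      mul_one, mul_zero, add_zero, zero_add, if_neg, not_false_iff] at e0 e1 e2 e3
    norm_num at e0 e1 e2 e3
    fin_cases i
    · rw [if_neg (by omega : ¬(r = 0)), add_zero] at e0
      exact e0
    · rw [if_neg (by omega : ¬(1 = r)), if_neg (by omega : ¬(r = 0)), add_zero, add_zero] at e1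
      exact e1
    · rw [if_neg (by omega : ¬(r = 0)), if_neg (by omega : ¬(1 = r)), zero_add, zero_add] at e2
      exact e2
    · rw [if_neg (by omega : ¬(0 = r)), zero_add] at e3
      exact e3
  · obtain ⟨w, hw⟩ := hdvdK
    refine ⟨Polynomial.C (1/A) * w, ?_⟩
    rw [← hP, hw, show Polynomial.C A * P₁ * (Polynomial.C (1/A) * w)
      = (Polynomial.C A * Polynomial.C (1/A)) * (P₁ * w) from by ring, hC1, one_mul]
end
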